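/- Let (X,d) be a metric space and T : X → X satisfy the Gregus–Ćirić contraction condition with constants 0 < a < 1, a + b = 1, c ≤ 1/2. Then for every x ∈ X there exists n ≥ 1 such that d(T^n x, T^{n+2} x) ≤ (2/(2 - a)) · d(x, T x). -/

import Mathlib

theorem stmt_2 {X : Type*} [MetricSpace X] (T : X → X) (a b c : ℝ)
    (ha0 : 0 < a) (ha1 : a < 1) (hab : a + b = 1) (hc : c ≤ 1/2)
    (hT : ∀ x y : X, dist (T x) (T y) ≤
      a * max (dist x y) (c * (dist x (T y) + dist y (T x))) +
      b * max (dist x (T x)) (dist y (T y))) :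
    ∀ x : X, ∃ n : ℕ, 1 ≤ n ∧
      dist (T^[n] x) (T^[n+2] x) ≤ (2/(2 - a)) * dist x (T x) := by
  intro x
  have hb0 : 0 < b := by linarith
  have h2a : 0 < 2 - a := by linarith
  -- Lemma A : d(Ty, T²y) ≤ d(y, Ty)
  have lemA : ∀ y : X, dist (T y) (T (T y)) ≤ dist y (T y) := by
    intro y
    have h := hT y (T y)
    have h0 : dist (T y) (T y) = 0 := dist_self _
    set d0 := dist y (T y) with hd0
    set d1 := dist (T y) (T (T y)) with hd1
    have htri : dist y (T (T y)) ≤ d0 + d1 := dist_triangle _ _ _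
    have hnn : 0 ≤ dist y (T (T y)) := dist_nonneg
    have hnn0 : 0 ≤ d0 := dist_nonneg
    have hnn1 : 0 ≤ d1 := dist_nonneg
    have hcS : c * (dist y (T (T y)) + dist (T y) (T y)) ≤ (d0 + d1) / 2 := by
      rw [h0]; nlinarith
    rcases le_total d1 d0 with h' | h'
    · exact h'
    · have hmax1 : max d0 (c * (dist y (T (T y)) + dist (T y) (T y))) ≤ (d0 + d1) / 2 :=
        max_le (by linarith) hcS
      have hmax2 : max d0 d1 = d1 := max_eq_right h'
      rw [hmax2] at h
      have := mul_le_mul_of_nonneg_left hmax1 ha0.le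
      nlinarith
  -- Key dichotomy
  have key : ∀ y : X, dist (T y) (T (T (T y))) ≤ a * dist y (T (T y)) + b * dist y (T y) ∨
      dist (T y) (T (T (T y))) ≤ (2/(2 - a)) * dist y (T y) := by
    intro y
    have h := hT y (T (T y))
    set p0 := dist y (T y) with hp0def
    have hp1 : dist (T y) (T (T y)) ≤ p0 := lemA y
    have hp2 : dist (T (T y)) (T (T (T y))) ≤ dist (T y) (T (T y)) := lemA (T y)
    set e0 := dist y (T (T y)) with he0def
    set e1 := dist (T y) (T (T (T y))) with he1def
    have htri : dist y (T (T (T y))) ≤ p0 + e1 := dist_triangle _ (T y) _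
    have hS : dist (T (T y)) (T y) = dist (T y) (T (T y)) := dist_comm _ _
    have hnnS : 0 ≤ dist y (T (T (T y))) + dist (T (T y)) (T y) := by positivity
    have hcS : c * (dist y (T (T (T y))) + dist (T (T y)) (T y)) ≤ (e1 + 2 * p0) / 2 := by
      have h1 : c * (dist y (T (T (T y))) + dist (T (T y)) (T y)) ≤
          (1/2) * (dist y (T (T (T y))) + dist (T (T y)) (T y)) := by nlinarith
      rw [hS] at h1
      nlinarith
    have hbmax : max (dist y (T y)) (dist (T (T y)) (T (T (T y)))) ≤ p0 :=
      max_le le_rfl (hp2.trans hp1)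
    have hb' := mul_le_mul_of_nonneg_left hbmax hb0.le
    rcases le_total ((e1 + 2 * p0) / 2) e0 with h' | h'
    · left
      have hmax : max e0 (c * (dist y (T (T (T y))) + dist (T (T y)) (T y))) ≤ e0 :=
        max_le le_rfl (hcS.trans h')
      have := mul_le_mul_of_nonneg_left hmax ha0.le
      linarith
    · right
      have hmax : max e0 (c * (dist y (T (T (T y))) + dist (T (T y)) (T y))) ≤
          (e1 + 2 * p0) / 2 := max_le h' hcS
      have := mul_le_mul_of_nonneg_left hmax ha0.le
      have hbp : a * p0 + b * p0 = p0 := by rw [← add_mul, hab, one_mul]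
      have he1 : e1 * (2 - a) ≤ 2 * p0 := by linarith
      rw [div_mul_eq_mul_div, le_div_iff₀ h2a]
      linarith [he1]
  -- iterate identities
  have hit : ∀ m : ℕ, T^[m+1] x = T (T^[m] x) := fun m => Function.iterate_succ_apply' T m x
  have hit2 : ∀ m : ℕ, T^[m+2] x = T (T (T^[m] x)) := by
    intro m
    rw [show m + 2 = (m+1) + 1 from rfl, hit (m+1), hit m]
  have hit3 : ∀ m : ℕ, T^[m+3] x = T (T (T (T^[m] x))) := by
    intro m
    rw [show m + 3 = (m+2) + 1 from rfl, hit (m+2), hit2 m]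
  -- d_n ≤ δ
  set δ := dist x (T x) with hδdef
  have hδnn : 0 ≤ δ := dist_nonneg
  have dmono : ∀ n : ℕ, dist (T^[n] x) (T^[n+1] x) ≤ δ := by
    intro n
    induction n with
    | zero => simp [hδdef]
    | succ n ih =>
      have : dist (T^[n+1] x) (T^[n+1+1] x) ≤ dist (T^[n] x) (T^[n+1] x) := by
        rw [hit2 n, hit n]
        exact lemA _
      exact this.trans ih
  by_contra hcon
  push_neg at hcon
  -- step: e(n+1) ≤ a e(n) + b δ for all n
  have step : ∀ n : ℕ, dist (T^[n+1] x) (T^[n+3] x) ≤ a * dist (T^[n] x) (T^[n+2] x) + b * δ := by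
    intro n
    rcases key (T^[n] x) with h | h
    · rw [← hit3 n, ← hit2 n, ← hit n] at h
      have := dmono n
      nlinarith
    · exfalso
      rw [← hit3 n, ← hit n] at h
      have h1 := hcon (n+1) (by omega)
      have h2 : (2/(2-a)) * dist (T^[n] x) (T^[n+1] x) ≤ (2/(2-a)) * δ := by
        have := dmono n
        have hpos : 0 ≤ 2/(2-a) := by positivity
        nlinarith
      have h3 : T^[n+1+2] x = T^[n+3] x := rfl
      rw [h3] at h1
      linarith
  -- decay
  have decay : ∀ n : ℕ, dist (T^[n+1] x) (T^[n+3] x) ≤ δ + a ^ n * δ := by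
    intro n
    induction n with
    | zero =>
      have h1 : dist (T^[1] x) (T^[3] x) ≤ dist (T^[1] x) (T^[2] x) + dist (T^[2] x) (T^[3] x) :=
        dist_triangle _ _ _
      have h2 := dmono 1
      have h3 := dmono 2
      simpa using h1.trans (by linarith)
    | succ n ih =>
      have h1 := step (n+1)
      have h2 : dist (T^[n+1] x) (T^[n+1+2] x) = dist (T^[n+1] x) (T^[n+3] x) := rfl
      rw [h2] at h1
      calc dist (T^[n+1+1] x) (T^[n+1+3] x) ≤ a * dist (T^[n+1] x) (T^[n+3] x) + b * δ := h1
        _ ≤ a * (δ + a ^ n * δ) + b * δ := by nlinarith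
        _ = δ + a ^ (n+1) * δ := by linear_combination δ * hab
  obtain ⟨N, hN⟩ := exists_pow_lt_of_lt_one (show (0:ℝ) < a / (2 - a) by positivity) ha1
  have h1 := hcon (N+1) (by omega)
  have h2 := decay N
  have h3 : T^[N+1+2] x = T^[N+3] x := rfl
  rw [h3] at h1
  have hK : (2/(2-a)) * (2 - a) = 2 := by field_simp
  have hN' : a ^ N * (2 - a) < a := (lt_div_iff₀ h2a).mp hN
  nlinarith [pow_nonneg ha0.le N, mul_le_mul_of_nonneg_right hN'.le hδnn,
    mul_lt_mul_of_pos_right h1 h2a]
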